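/- Let A⁽¹⁾, A⁽²⁾ be real s×s matrices and b ∈ ℝˢ satisfying the symplecticity condition diag(b)·A⁽¹⁾ + (A⁽²⁾)ᵀ·diag(b) = b·bᵀ. Let z > 0 be such that I + z²A⁽²⁾A⁽¹⁾ is invertible, and define the row vectors D⁽¹⁾ = bᵀ(I + z²A⁽²⁾A⁽¹⁾)⁻¹ and D⁽²⁾ = bᵀ(I + z²A⁽¹⁾A⁽²⁾)⁻¹, and e = (1,…,1)ᵀ. Then (D⁽¹⁾e)·(D⁽²⁾e) = D⁽¹⁾A⁽²⁾e + D⁽²⁾A⁽¹⁾e − z²·(D⁽¹⁾A⁽²⁾e)·(D⁽²⁾A⁽¹⁾e); equivalently, the 2×2 update matrix [[1 − z²·D⁽¹⁾A⁽²⁾e, −z·D⁽¹⁾e], [z·D⁽²⁾e, 1 − z²·D⁽²⁾A⁽¹⁾e]] has determinant 1. -/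

import Mathlib

open Matrix

/-- Symplecticity of a partitioned Runge–Kutta method implies the area-preservation identity
`(D⁽¹⁾e)(D⁽²⁾e) = D⁽¹⁾A⁽²⁾e + D⁽²⁾A⁽¹⁾e − z²(D⁽¹⁾A⁽²⁾e)(D⁽²⁾A⁽¹⁾e)`, i.e. the one-step
update matrix has determinant `1`. -/
theorem sprk_update_det_one
    (s : ℕ) (A1 A2 : Matrix (Fin s) (Fin s) ℝ) (b : Fin s → ℝ)
    (hsymp : Matrix.diagonal b * A1 + A2ᵀ * Matrix.diagonal b = Matrix.vecMulVec b b)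
    (z : ℝ) (hz : 0 < z)
    (hM : IsUnit (1 + z ^ 2 • (A2 * A1) : Matrix (Fin s) (Fin s) ℝ))
    (e : Fin s → ℝ) (he : e = fun _ => 1)
    (D1 D2 : Fin s → ℝ)
    (hD1 : D1 = Matrix.vecMul b (1 + z ^ 2 • (A2 * A1))⁻¹)
    (hD2 : D2 = Matrix.vecMul b (1 + z ^ 2 • (A1 * A2))⁻¹) :
    (D1 ⬝ᵥ e) * (D2 ⬝ᵥ e) =
        D1 ⬝ᵥ (A2 *ᵥ e) + D2 ⬝ᵥ (A1 *ᵥ e)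
          - z ^ 2 * (D1 ⬝ᵥ (A2 *ᵥ e)) * (D2 ⬝ᵥ (A1 *ᵥ e)) ∧
      Matrix.det !![1 - z ^ 2 * (D1 ⬝ᵥ (A2 *ᵥ e)), -z * (D1 ⬝ᵥ e);
                    z * (D2 ⬝ᵥ e), 1 - z ^ 2 * (D2 ⬝ᵥ (A1 *ᵥ e))] = 1 := by
  set M1 : Matrix (Fin s) (Fin s) ℝ := 1 + z ^ 2 • (A2 * A1) with hM1def
  set M2 : Matrix (Fin s) (Fin s) ℝ := 1 + z ^ 2 • (A1 * A2) with hM2def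
  -- M2 is a unit too
  have hdet : M2.det = M1.det := by
    rw [hM1def, hM2def]
    calc (1 + z ^ 2 • (A1 * A2)).det = (1 + (z ^ 2 • A1) * A2).det := by
          rw [smul_mul_assoc]
      _ = (1 + A2 * (z ^ 2 • A1)).det := Matrix.det_one_add_mul_comm _ _
      _ = (1 + z ^ 2 • (A2 * A1)).det := by rw [mul_smul_comm]
  have hM' : IsUnit M1.det := (Matrix.isUnit_iff_isUnit_det M1).mp hM
  have hM2' : IsUnit M2.det := hdet ▸ hM'
  have h1i : M1 * M1⁻¹ = 1 := Matrix.mul_nonsing_inv _ hM'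
  have h1i' : M1⁻¹ * M1 = 1 := Matrix.nonsing_inv_mul _ hM'
  have h2i : M2 * M2⁻¹ = 1 := Matrix.mul_nonsing_inv _ hM2'
  have h2i' : M2⁻¹ * M2 = 1 := Matrix.nonsing_inv_mul _ hM2'
  set x : Fin s → ℝ := M1⁻¹ *ᵥ e with hxdef
  set y : Fin s → ℝ := M2⁻¹ *ᵥ e with hydef
  have hx : M1 *ᵥ x = e := by rw [hxdef, Matrix.mulVec_mulVec, h1i, Matrix.one_mulVec]
  have hy : M2 *ᵥ y = e := by rw [hydef, Matrix.mulVec_mulVec, h2i, Matrix.one_mulVec]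
  -- commutation lemmas
  have hcomm : M1 * A2 = A2 * M2 := by
    rw [hM1def, hM2def, add_mul, mul_add, one_mul, mul_one, smul_mul_assoc, mul_smul_comm,
      mul_assoc]
  have hcomm' : M2 * A1 = A1 * M1 := by
    rw [hM1def, hM2def, add_mul, mul_add, one_mul, mul_one, smul_mul_assoc, mul_smul_comm,
      mul_assoc]
  have hicomm : M1⁻¹ * A2 = A2 * M2⁻¹ := by
    calc M1⁻¹ * A2 = M1⁻¹ * A2 * (M2 * M2⁻¹) := by rw [h2i, mul_one]
      _ = M1⁻¹ * (A2 * M2) * M2⁻¹ := by rw [mul_assoc, mul_assoc, mul_assoc]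
      _ = M1⁻¹ * (M1 * A2) * M2⁻¹ := by rw [hcomm]
      _ = A2 * M2⁻¹ := by rw [← mul_assoc, h1i', one_mul]
  have hicomm' : M2⁻¹ * A1 = A1 * M1⁻¹ := by
    calc M2⁻¹ * A1 = M2⁻¹ * A1 * (M1 * M1⁻¹) := by rw [h1i, mul_one]
      _ = M2⁻¹ * (A1 * M1) * M1⁻¹ := by rw [mul_assoc, mul_assoc, mul_assoc]
      _ = M2⁻¹ * (M2 * A1) * M1⁻¹ := by rw [hcomm']
      _ = A1 * M1⁻¹ := by rw [← mul_assoc, h2i', one_mul]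
  -- rewrite the four dot products
  set u : Fin s → ℝ := A1 *ᵥ x with hudef
  set v : Fin s → ℝ := A2 *ᵥ y with hvdef
  have hd1e : D1 ⬝ᵥ e = b ⬝ᵥ x := by
    rw [hD1, hxdef, ← Matrix.dotProduct_mulVec]
  have hd2e : D2 ⬝ᵥ e = b ⬝ᵥ y := by
    rw [hD2, hydef, ← Matrix.dotProduct_mulVec]
  have hd1a : D1 ⬝ᵥ (A2 *ᵥ e) = b ⬝ᵥ v := by
    rw [hD1, ← Matrix.dotProduct_mulVec, hvdef, hydef, Matrix.mulVec_mulVec,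
      Matrix.mulVec_mulVec, ← hicomm]
  have hd2a : D2 ⬝ᵥ (A1 *ᵥ e) = b ⬝ᵥ u := by
    rw [hD2, ← Matrix.dotProduct_mulVec, hudef, hxdef, Matrix.mulVec_mulVec,
      Matrix.mulVec_mulVec, ← hicomm']
  -- key identity from symplecticity
  have hvmv : ∀ q : Fin s → ℝ, Matrix.vecMulVec b b *ᵥ q = (b ⬝ᵥ q) • b := by
    intro q
    funext i
    simp only [Matrix.mulVec, dotProduct, Matrix.vecMulVec_apply, Pi.smul_apply, smul_eq_mul]
    rw [Finset.sum_mul]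
    exact Finset.sum_congr rfl fun j _ => by ring
  have key : ∀ p q : Fin s → ℝ,
      p ⬝ᵥ (Matrix.diagonal b *ᵥ (A1 *ᵥ q)) + (A2 *ᵥ p) ⬝ᵥ (Matrix.diagonal b *ᵥ q)
        = (b ⬝ᵥ q) * (b ⬝ᵥ p) := by
    intro p q
    have h := congrArg (fun M : Matrix (Fin s) (Fin s) ℝ => p ⬝ᵥ (M *ᵥ q)) hsymp
    simp only [Matrix.add_mulVec, dotProduct_add, ← Matrix.mulVec_mulVec] at h
    rw [Matrix.dotProduct_mulVec p A2ᵀ, Matrix.vecMul_transpose, hvmv, dotProduct_smul,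
      smul_eq_mul] at h
    rw [dotProduct_comm b p]
    exact h
  -- symmetry of the diagonal bilinear form
  have hBsym : ∀ w r : Fin s → ℝ,
      w ⬝ᵥ (Matrix.diagonal b *ᵥ r) = r ⬝ᵥ (Matrix.diagonal b *ᵥ w) := by
    intro w r
    simp only [dotProduct, Matrix.mulVec_diagonal]
    exact Finset.sum_congr rfl fun i _ => by ring
  -- expansions of x and y
  have hxe : x = e - z ^ 2 • (A2 *ᵥ u) := by
    have : x + z ^ 2 • ((A2 * A1) *ᵥ x) = e := by
      rw [← hx, hM1def, Matrix.add_mulVec, Matrix.one_mulVec, Matrix.smul_mulVec]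
    rw [hudef, Matrix.mulVec_mulVec, ← this]; abel
  have hye : y = e - z ^ 2 • (A1 *ᵥ v) := by
    have : y + z ^ 2 • ((A1 * A2) *ᵥ y) = e := by
      rw [← hy, hM2def, Matrix.add_mulVec, Matrix.one_mulVec, Matrix.smul_mulVec]
    rw [hvdef, Matrix.mulVec_mulVec, ← this]; abel
  -- first-order terms
  have hbe : ∀ w : Fin s → ℝ, e ⬝ᵥ (Matrix.diagonal b *ᵥ w) = b ⬝ᵥ w := by
    intro w
    simp only [dotProduct, Matrix.mulVec_diagonal, he]
    exact Finset.sum_congr rfl fun i _ => by ring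
  have hbe' : ∀ w : Fin s → ℝ, w ⬝ᵥ (Matrix.diagonal b *ᵥ e) = b ⬝ᵥ w := by
    intro w; rw [hBsym, hbe]
  -- main computation
  have main : (b ⬝ᵥ x) * (b ⬝ᵥ y) = b ⬝ᵥ v + b ⬝ᵥ u - z ^ 2 * ((b ⬝ᵥ v) * (b ⬝ᵥ u)) := by
    have t1 : y ⬝ᵥ (Matrix.diagonal b *ᵥ u)
        = b ⬝ᵥ u - z ^ 2 * ((A1 *ᵥ v) ⬝ᵥ (Matrix.diagonal b *ᵥ u)) := by
      rw [hye, sub_dotProduct, smul_dotProduct, hbe, smul_eq_mul]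
    have t2 : v ⬝ᵥ (Matrix.diagonal b *ᵥ x)
        = b ⬝ᵥ v - z ^ 2 * (v ⬝ᵥ (Matrix.diagonal b *ᵥ (A2 *ᵥ u))) := by
      rw [hxe, Matrix.mulVec_sub, dotProduct_sub, Matrix.mulVec_smul, dotProduct_smul,
        hbe', smul_eq_mul]
    have t3 : (A1 *ᵥ v) ⬝ᵥ (Matrix.diagonal b *ᵥ u)
          + v ⬝ᵥ (Matrix.diagonal b *ᵥ (A2 *ᵥ u)) = (b ⬝ᵥ v) * (b ⬝ᵥ u) := by
      rw [hBsym (A1 *ᵥ v) u, hBsym v (A2 *ᵥ u)]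
      exact key u v
    rw [← key y x, t1, t2]
    linear_combination (-(z ^ 2)) * t3
  constructor
  · rw [hd1e, hd2e, hd1a, hd2a, main]; ring
  · rw [Matrix.det_fin_two_of, hd1e, hd2e, hd1a, hd2a]
    nlinarith [main, sq_nonneg z]
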